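/- Let T be a binary decision tree over ℝ^d with classes {1,…,c}, let X and X̃ be finite subsets of ℝ^d, let ε ≥ 0, and let r : X → X̃ be a map with ‖x − r(x)‖_∞ ≤ ε for all x ∈ X. If for every x̃ ∈ X̃ the margin of x̃ at T is strictly greater than ε, then eval(T, x) = eval(T, r(x)) for every x ∈ X; that is, T predicts the same class for every point of X as for its representative in X̃. -/
import Mathlib


open scoped Classical

/-- A binary decision tree over `ℝ^d` with classes `{1,…,c}` (encoded as `Fin c`):
either a leaf labeled by a class, or an internal node carrying a feature index,
a threshold, and two subtrees. -/
inductive DTree (d c : ℕ) : Type where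
  | leaf (k : Fin c) : DTree d c
  | node (j : Fin d) (t : ℝ) (L R : DTree d c) : DTree d c

namespace DTree

variable {d c : ℕ}

/-- Evaluation of a decision tree at a point `x : ℝ^d`. -/
noncomputable def eval : DTree d c → (Fin d → ℝ) → Fin c
  | leaf k, _ => k
  | node j t L R, x => if x j < t then L.eval x else R.eval x

/-- The path of `x` through the tree: the sequence of internal nodes
(feature index, threshold) visited during evaluation. -/
noncomputable def path : DTree d c → (Fin d → ℝ) → List (Fin d × ℝ)
  | leaf _, _ => []
  | node j t L R, x => (j, t) :: (if x j < t then L.path x else R.path x)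

/-- The position (sequence of left/right choices) of the leaf reached by `x`. -/
noncomputable def leafPos : DTree d c → (Fin d → ℝ) → List Bool
  | leaf _, _ => []
  | node j t L R, x =>
      if x j < t then false :: L.leafPos x else true :: R.leafPos x

/-- The margin of `x̃` at the tree: the minimum of `|t - x̃ j|` over internal
nodes `(j, t)` on the path of `x̃`, and `+∞` for a single leaf. -/
noncomputable def margin : DTree d c → (Fin d → ℝ) → EReal
  | leaf _, _ => ⊤
  | node j t L R, x =>
      min (↑|t - x j|) (if x j < t then L.margin x else R.margin x)

/-- The set of leaves of the tree, identified with root-to-leaf positions. -/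
def leaves : DTree d c → Finset (List Bool)
  | leaf _ => {[]}
  | node _ _ L R => (L.leaves.image (false :: ·)) ∪ (R.leaves.image (true :: ·))

/-- The class label of the leaf at a given root-to-leaf position, if it exists. -/
def labelAt : DTree d c → List Bool → Option (Fin c)
  | leaf k, [] => some k
  | node _ _ L _, false :: p => L.labelAt p
  | node _ _ _ R, true :: p => R.labelAt p
  | _, _ => none

end DTree

/-- Let `X`, `X'` be finite subsets of `ℝ^d` and `r` a map sending each point of
`X` into `X'` with `‖x − r x‖_∞ ≤ ε`. If the margin of every `x' ∈ X'` at the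
tree `T` is strictly greater than `ε`, then `T` predicts the same class for
every point of `X` as for its representative. -/
lemma DTree.eval_eq_of_close {d c : ℕ} (T : DTree d c) (ε : ℝ)
    (x x' : Fin d → ℝ) (hclose : ∀ j, |x j - x' j| ≤ ε)
    (hmargin : (ε : EReal) < T.margin x') : T.eval x = T.eval x' := by
  induction T with
  | leaf k => rfl
  | node j t L R ihL ihR =>
    simp only [DTree.margin, lt_min_iff] at hmargin
    obtain ⟨h1, h2⟩ := hmargin
    have h1' : ε < |t - x' j| := by exact_mod_cast h1
    have hsame : x j < t ↔ x' j < t := by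
      have := hclose j
      rcases lt_or_ge (x' j) t with h | h
      · constructor
        · intro _; exact h
        · intro _
          have : |t - x' j| = t - x' j := abs_of_pos (by linarith)
          rw [this] at h1'
          rcases abs_le.mp (hclose j) with ⟨ha, hb⟩
          linarith
      · constructor
        · intro hx
          have : |t - x' j| = -(t - x' j) := abs_of_nonpos (by linarith)
          rw [this] at h1'
          rcases abs_le.mp (hclose j) with ⟨ha, hb⟩
          linarith
        · intro hx; linarith
    by_cases hx : x' j < t
    · have hx2 : x j < t := hsame.mpr hx
      simp only [DTree.eval, if_pos hx, if_pos hx2]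
      rw [if_pos hx] at h2
      exact ihL h2
    · have hx2 : ¬ x j < t := fun h => hx (hsame.mp h)
      simp only [DTree.eval, if_neg hx, if_neg hx2]
      rw [if_neg hx] at h2
      exact ihR h2

theorem DTree.eval_eq_of_representative {d c : ℕ} (T : DTree d c)
    (X X' : Finset (Fin d → ℝ)) (ε : ℝ) (hε : 0 ≤ ε)
    (r : (Fin d → ℝ) → (Fin d → ℝ)) (hr : ∀ x ∈ X, r x ∈ X')
    (hclose : ∀ x ∈ X, ‖x - r x‖ ≤ ε)
    (hmargin : ∀ x' ∈ X', (ε : EReal) < T.margin x') :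
    ∀ x ∈ X, T.eval x = T.eval (r x) := by
  intro x hx
  apply T.eval_eq_of_close ε x (r x)
  · intro j
    calc |x j - r x j| = |(x - r x) j| := by simp [Pi.sub_apply]
      _ ≤ ‖x - r x‖ := by
          rw [← Real.norm_eq_abs]; exact norm_le_pi_norm (x - r x) j
      _ ≤ ε := hclose x hx
  · exact hmargin (r x) (hr x hx)
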